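/- Let d ∈ ℕ, d ≥ 2, and for θ ∈ ℝ let R_θ : ℝ^d → ℝ^d be the linear map rotating the first two coordinates by angle θ (anticlockwise) and fixing the remaining coordinates. Then: (i) for all θ₁, θ₂ ∈ ℝ and y ∈ ℝ^d, ‖R_{θ₂}(y) − R_{θ₁}(y)‖ ≤ π·|θ₂ − θ₁|·‖y‖; (ii) if t₀ > 0 and ψ : [0, ∞) → ℝ is a Lipschitz function with ψ(t) = 0 for all t ≥ t₀, then the mapping Φ : ℝ^d → ℝ^d defined by Φ(x) = R_{ψ(‖x‖)}(x) is (π·Lip(ψ)·t₀ + 1)-bilipschitz and satisfies Φ(x) = x for all x ∈ ℝ^d \ B(0, t₀). -/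

import Mathlib

noncomputable section

/-- `f` is `M`-bilipschitz on the set `s`. -/
def IsBilipOn {α β : Type*} [PseudoMetricSpace α] [PseudoMetricSpace β]
    (M : ℝ) (f : α → β) (s : Set α) : Prop :=
  ∀ x ∈ s, ∀ y ∈ s,
    (1 / M) * dist x y ≤ dist (f x) (f y) ∧ dist (f x) (f y) ≤ M * dist x y

/-- The linear map `R_θ : ℝ^d → ℝ^d` rotating the first two coordinates
anticlockwise by the angle `θ` and fixing the remaining coordinates. -/
def rot {d : ℕ} (hd : 2 ≤ d) (θ : ℝ) (x : EuclideanSpace ℝ (Fin d)) :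
    EuclideanSpace ℝ (Fin d) := WithLp.toLp 2 fun i =>
  if i = (⟨0, by omega⟩ : Fin d) then
    Real.cos θ * x ⟨0, by omega⟩ - Real.sin θ * x ⟨1, by omega⟩
  else if i = (⟨1, by omega⟩ : Fin d) then
    Real.sin θ * x ⟨0, by omega⟩ + Real.cos θ * x ⟨1, by omega⟩
  else x i

variable {d : ℕ}

lemma my_sum_split (hd : 2 ≤ d) (f : Fin d → ℝ) :
    ∑ i, f i = f ⟨0, by omega⟩ + (f ⟨1, by omega⟩ +
      ∑ i ∈ (Finset.univ.erase ⟨0, by omega⟩).erase ⟨1, by omega⟩, f i) := by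
  have h1 : (⟨1, by omega⟩ : Fin d) ∈ Finset.univ.erase ⟨0, by omega⟩ := by
    simp [Fin.ext_iff]
  rw [← Finset.add_sum_erase _ f (Finset.mem_univ (⟨0, by omega⟩ : Fin d)),
      ← Finset.add_sum_erase _ f h1]

lemma rot_apply_of_ne (hd : 2 ≤ d) (θ : ℝ) (x : EuclideanSpace ℝ (Fin d)) {i : Fin d}
    (h0 : i ≠ ⟨0, by omega⟩) (h1 : i ≠ ⟨1, by omega⟩) : rot hd θ x i = x i := by
  simp [rot, h0, h1]

lemma rot_apply_zero (hd : 2 ≤ d) (θ : ℝ) (x : EuclideanSpace ℝ (Fin d)) :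
    rot hd θ x ⟨0, by omega⟩ = Real.cos θ * x ⟨0, by omega⟩ - Real.sin θ * x ⟨1, by omega⟩ := by
  simp [rot]

lemma rot_apply_one (hd : 2 ≤ d) (θ : ℝ) (x : EuclideanSpace ℝ (Fin d)) :
    rot hd θ x ⟨1, by omega⟩ = Real.sin θ * x ⟨0, by omega⟩ + Real.cos θ * x ⟨1, by omega⟩ := by
  have : (⟨1, by omega⟩ : Fin d) ≠ ⟨0, by omega⟩ := by simp [Fin.ext_iff]
  simp [rot, this]

lemma my_norm_eq (x : EuclideanSpace ℝ (Fin d)) : ‖x‖ = Real.sqrt (∑ i, x i ^ 2) := by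
  rw [EuclideanSpace.norm_eq]
  simp [sq_abs]

lemma sub_apply' (x y : EuclideanSpace ℝ (Fin d)) (i : Fin d) : (x - y) i = x i - y i := rfl

lemma rot_zero (hd : 2 ≤ d) (x : EuclideanSpace ℝ (Fin d)) : rot hd 0 x = x := by
  ext i
  by_cases h0 : i = (⟨0, by omega⟩ : Fin d)
  · subst h0; simp [rot_apply_zero]
  · by_cases h1 : i = (⟨1, by omega⟩ : Fin d)
    · subst h1; simp [rot_apply_one]
    · exact rot_apply_of_ne hd 0 x h0 h1

lemma rot_rot (hd : 2 ≤ d) (θ₁ θ₂ : ℝ) (x : EuclideanSpace ℝ (Fin d)) :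
    rot hd θ₁ (rot hd θ₂ x) = rot hd (θ₁ + θ₂) x := by
  ext i
  by_cases h0 : i = (⟨0, by omega⟩ : Fin d)
  · subst h0
    simp only [rot_apply_zero, rot_apply_one, Real.cos_add, Real.sin_add]
    ring
  · by_cases h1 : i = (⟨1, by omega⟩ : Fin d)
    · subst h1
      simp only [rot_apply_zero, rot_apply_one, Real.cos_add, Real.sin_add]
      ring
    · rw [rot_apply_of_ne hd _ _ h0 h1, rot_apply_of_ne hd _ _ h0 h1,
        rot_apply_of_ne hd _ _ h0 h1]

lemma rot_norm (hd : 2 ≤ d) (θ : ℝ) (x : EuclideanSpace ℝ (Fin d)) :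
    ‖rot hd θ x‖ = ‖x‖ := by
  rw [my_norm_eq, my_norm_eq, my_sum_split hd (fun i => rot hd θ x i ^ 2),
    my_sum_split hd (fun i => x i ^ 2)]
  have htail : ∑ i ∈ (Finset.univ.erase ⟨0, by omega⟩).erase ⟨1, by omega⟩,
      rot hd θ x i ^ 2 = ∑ i ∈ (Finset.univ.erase ⟨0, by omega⟩).erase ⟨1, by omega⟩,
      x i ^ 2 := by
    refine Finset.sum_congr rfl fun i hi => ?_
    rw [Finset.mem_erase, Finset.mem_erase] at hi
    rw [rot_apply_of_ne hd _ _ hi.2.1 hi.1]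
  rw [htail, rot_apply_zero, rot_apply_one]
  congr 1
  have := Real.sin_sq_add_cos_sq θ
  nlinarith [this]

lemma rot_sub (hd : 2 ≤ d) (θ : ℝ) (x y : EuclideanSpace ℝ (Fin d)) :
    rot hd θ (x - y) = rot hd θ x - rot hd θ y := by
  ext i
  by_cases h0 : i = (⟨0, by omega⟩ : Fin d)
  · subst h0; rw [sub_apply', rot_apply_zero, rot_apply_zero, rot_apply_zero,
      sub_apply', sub_apply']; ring
  · by_cases h1 : i = (⟨1, by omega⟩ : Fin d)
    · subst h1; rw [sub_apply', rot_apply_one, rot_apply_one, rot_apply_one,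
        sub_apply', sub_apply']; ring
    · rw [sub_apply', rot_apply_of_ne hd _ _ h0 h1, rot_apply_of_ne hd _ _ h0 h1,
        rot_apply_of_ne hd _ _ h0 h1, sub_apply']

lemma rot_dist (hd : 2 ≤ d) (θ : ℝ) (x y : EuclideanSpace ℝ (Fin d)) :
    dist (rot hd θ x) (rot hd θ y) = dist x y := by
  rw [dist_eq_norm, dist_eq_norm, ← rot_sub, rot_norm]

lemma norm_rot_sub_rot (hd : 2 ≤ d) (θ₁ θ₂ : ℝ) (y : EuclideanSpace ℝ (Fin d)) :
    ‖rot hd θ₂ y - rot hd θ₁ y‖ ≤ |θ₂ - θ₁| * ‖y‖ := by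
  obtain ⟨t, ht⟩ : ∃ t, t = θ₂ - θ₁ := ⟨_, rfl⟩
  have key : ∑ i, ((rot hd θ₂ y - rot hd θ₁ y) i) ^ 2 ≤ t ^ 2 * ∑ i, y i ^ 2 := by
    rw [my_sum_split hd (fun i => ((rot hd θ₂ y - rot hd θ₁ y) i) ^ 2),
      my_sum_split hd (fun i => y i ^ 2)]
    have htail : ∑ i ∈ (Finset.univ.erase ⟨0, by omega⟩).erase ⟨1, by omega⟩,
        ((rot hd θ₂ y - rot hd θ₁ y) i) ^ 2 = 0 := by
      refine Finset.sum_eq_zero fun i hi => ?_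
      rw [Finset.mem_erase, Finset.mem_erase] at hi
      rw [sub_apply', rot_apply_of_ne hd _ _ hi.2.1 hi.1,
        rot_apply_of_ne hd _ _ hi.2.1 hi.1, sub_self]
      ring
    have htail2 : (0:ℝ) ≤ ∑ i ∈ (Finset.univ.erase ⟨0, by omega⟩).erase ⟨1, by omega⟩,
        y i ^ 2 := Finset.sum_nonneg fun i _ => sq_nonneg _
    rw [htail]
    simp only [sub_apply', rot_apply_zero, rot_apply_one]
    -- 2 - 2 cos t ≤ t ^ 2
    have hcos : 2 - 2 * Real.cos t ≤ t ^ 2 := by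
      have hsin : Real.sin (t / 2) ^ 2 ≤ (t / 2) ^ 2 := Real.sin_sq_le_sq
      have hhalf := Real.sin_sq_eq_half_sub (t / 2)
      have h2 : 2 * (t / 2) = t := by ring
      rw [h2] at hhalf
      nlinarith [hsin, hhalf]
    have hc2 : Real.cos θ₂ * Real.cos θ₁ + Real.sin θ₂ * Real.sin θ₁ = Real.cos t := by
      rw [ht, Real.cos_sub]
    nlinarith [sq_nonneg (y (⟨0, by omega⟩ : Fin d)), sq_nonneg (y (⟨1, by omega⟩ : Fin d)),
      Real.sin_sq_add_cos_sq θ₁, Real.sin_sq_add_cos_sq θ₂, hcos, hc2, htail2,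
      Real.cos_le_one t]
  rw [my_norm_eq, my_norm_eq, show |θ₂ - θ₁| = |t| by rw [ht]]
  calc Real.sqrt (∑ i, ((rot hd θ₂ y - rot hd θ₁ y) i) ^ 2)
      ≤ Real.sqrt (t ^ 2 * ∑ i, y i ^ 2) := Real.sqrt_le_sqrt key
    _ = |t| * Real.sqrt (∑ i, y i ^ 2) := by
        rw [Real.sqrt_mul (sq_nonneg t), Real.sqrt_sq_eq_abs]

lemma upper_est (hd : 2 ≤ d) (t₀ : ℝ) (ht₀ : 0 < t₀) (ψ : ℝ → ℝ) (Lψ : ℝ) (hL : 0 ≤ Lψ)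
    (hlip : ∀ s ∈ Set.Ici (0:ℝ), ∀ t ∈ Set.Ici (0:ℝ), |ψ s - ψ t| ≤ Lψ * |s - t|)
    (hzero : ∀ t : ℝ, t₀ ≤ t → ψ t = 0)
    (x y : EuclideanSpace ℝ (Fin d)) :
    dist (rot hd (ψ ‖x‖) x) (rot hd (ψ ‖y‖) y) ≤ (Real.pi * Lψ * t₀ + 1) * dist x y := by
  -- WLOG ‖y‖ ≤ ‖x‖
  suffices H : ∀ u v : EuclideanSpace ℝ (Fin d), ‖v‖ ≤ ‖u‖ →
      dist (rot hd (ψ ‖u‖) u) (rot hd (ψ ‖v‖) v) ≤ (Real.pi * Lψ * t₀ + 1) * dist u v by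
    rcases le_total ‖y‖ ‖x‖ with h | h
    · exact H x y h
    · rw [dist_comm, dist_comm x y]; exact H y x h
  intro u v huv
  have h1 : dist (rot hd (ψ ‖u‖) u) (rot hd (ψ ‖v‖) v) ≤
      dist u v + ‖rot hd (ψ ‖u‖) v - rot hd (ψ ‖v‖) v‖ := by
    calc dist (rot hd (ψ ‖u‖) u) (rot hd (ψ ‖v‖) v)
        ≤ dist (rot hd (ψ ‖u‖) u) (rot hd (ψ ‖u‖) v) +
          dist (rot hd (ψ ‖u‖) v) (rot hd (ψ ‖v‖) v) := dist_triangle _ _ _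
      _ = dist u v + ‖rot hd (ψ ‖u‖) v - rot hd (ψ ‖v‖) v‖ := by
          rw [rot_dist, dist_eq_norm (rot hd (ψ ‖u‖) v)]
  have hM1 : (0:ℝ) ≤ Real.pi * Lψ * t₀ := by positivity
  by_cases hv : ‖v‖ ≤ t₀
  · have h2 : ‖rot hd (ψ ‖u‖) v - rot hd (ψ ‖v‖) v‖ ≤ |ψ ‖u‖ - ψ ‖v‖| * ‖v‖ :=
      norm_rot_sub_rot hd _ _ v
    have h3 : |ψ ‖u‖ - ψ ‖v‖| ≤ Lψ * |‖u‖ - ‖v‖| :=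
      hlip _ (norm_nonneg u) _ (norm_nonneg v)
    have h4 : |‖u‖ - ‖v‖| ≤ dist u v := by
      rw [dist_eq_norm]; exact abs_norm_sub_norm_le u v
    have h5 : |ψ ‖u‖ - ψ ‖v‖| * ‖v‖ ≤ Lψ * dist u v * t₀ := by
      have hv0 : (0:ℝ) ≤ ‖v‖ := norm_nonneg v
      have := mul_le_mul h3 hv (norm_nonneg v) (by positivity)
      calc |ψ ‖u‖ - ψ ‖v‖| * ‖v‖ ≤ (Lψ * |‖u‖ - ‖v‖|) * t₀ := this
        _ ≤ Lψ * dist u v * t₀ := by gcongr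
    have hpi : (1:ℝ) ≤ Real.pi := by nlinarith [Real.pi_gt_three]
    have hd0 : (0:ℝ) ≤ dist u v := dist_nonneg
    nlinarith [h1, h2, h5, hpi, mul_nonneg (mul_nonneg hL hd0) ht₀.le]
  · push_neg at hv
    have hu : ψ ‖u‖ = 0 := hzero _ (le_trans hv.le huv)
    have hv' : ψ ‖v‖ = 0 := hzero _ hv.le
    rw [hu, hv', rot_zero, rot_zero]
    nlinarith [dist_nonneg (x := u) (y := v), hM1]

theorem stmt15 (d : ℕ) (hd : 2 ≤ d) :
    (∀ θ₁ θ₂ : ℝ, ∀ y : EuclideanSpace ℝ (Fin d),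
      dist (rot hd θ₂ y) (rot hd θ₁ y) ≤ Real.pi * |θ₂ - θ₁| * ‖y‖) ∧
    (∀ t₀ : ℝ, 0 < t₀ → ∀ ψ : ℝ → ℝ, ∀ Lψ : ℝ, 0 ≤ Lψ →
      (∀ s ∈ Set.Ici (0 : ℝ), ∀ t ∈ Set.Ici (0 : ℝ), |ψ s - ψ t| ≤ Lψ * |s - t|) →
      (∀ t : ℝ, t₀ ≤ t → ψ t = 0) →
      IsBilipOn (Real.pi * Lψ * t₀ + 1)
        (fun x : EuclideanSpace ℝ (Fin d) => rot hd (ψ ‖x‖) x) Set.univ ∧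
      ∀ x : EuclideanSpace ℝ (Fin d), x ∉ Metric.ball 0 t₀ → rot hd (ψ ‖x‖) x = x) := by
  constructor
  · intro θ₁ θ₂ y
    rw [dist_eq_norm]
    have h1 := norm_rot_sub_rot hd θ₁ θ₂ y
    have hpi : (1:ℝ) ≤ Real.pi := by nlinarith [Real.pi_gt_three]
    nlinarith [mul_nonneg (abs_nonneg (θ₂ - θ₁)) (norm_nonneg y), h1]
  · intro t₀ ht₀ ψ Lψ hL hlip hzero
    have hM0 : (0:ℝ) < Real.pi * Lψ * t₀ + 1 := by positivity
    constructor
    · intro x _ y _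
      refine ⟨?_, upper_est hd t₀ ht₀ ψ Lψ hL hlip hzero x y⟩
      -- lower bound via the inverse map
      have hlip' : ∀ s ∈ Set.Ici (0:ℝ), ∀ t ∈ Set.Ici (0:ℝ),
          |(fun r => -ψ r) s - (fun r => -ψ r) t| ≤ Lψ * |s - t| := by
        intro s hs t ht
        have h := hlip t ht s hs
        rw [abs_sub_comm s t]
        simpa [neg_sub_neg, neg_add_eq_sub] using h
      have hzero' : ∀ t : ℝ, t₀ ≤ t → (fun r => -ψ r) t = 0 := by
        intro t ht; simp [hzero t ht]
      have key := upper_est hd t₀ ht₀ (fun r => -ψ r) Lψ hL hlip' hzero'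
        (rot hd (ψ ‖x‖) x) (rot hd (ψ ‖y‖) y)
      rw [rot_norm, rot_norm] at key
      simp only [rot_rot, neg_add_cancel, rot_zero] at key
      rw [one_div, inv_mul_le_iff₀ hM0]
      exact key
    · intro x hx
      rw [Metric.mem_ball, dist_zero_right] at hx
      push_neg at hx
      rw [hzero _ hx, rot_zero]

end
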